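/- arXiv:2301.07556 — 14 statements merged into one kernel-verified Lean document; each statement's English description precedes it below -/
import Mathlib

section
/- Let S ⊆ ℝⁿ be a strongly E-invex set with respect to Ψ, let I be a nonempty index set, and let {h_i}_{i ∈ I} be a family of functions h_i : ℝⁿ → ℝ, each semi strongly E-preinvex with respect to Ψ on S, such that for every u ∈ ℝⁿ the set {h_i u : i ∈ I} is bounded above. Then the function h defined by h s = ⨆_{i ∈ I} h_i s is semi strongly E-preinvex with respect to Ψ on S. -/
open Set

abbrev Rn (n : ℕ) := EuclideanSpace ℝ (Fin n)

/-- A set `S ⊆ ℝⁿ` is strongly E-invex (SEI) with respect to `Ψ`. -/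
def SEISet {n : ℕ} (E : Rn n → Rn n) (Ψ : Rn n × Rn n → Rn n) (S : Set (Rn n)) : Prop :=
  ∀ s ∈ S, ∀ t ∈ S, ∀ α ∈ Icc (0:ℝ) 1, ∀ l ∈ Icc (0:ℝ) 1,
    α • t + E t + l • Ψ (α • s + E s, α • t + E t) ∈ S

/-- Semi strongly E-preinvex (SSEP) with respect to `Ψ` on `S`. -/
def SSEP {n : ℕ} (E : Rn n → Rn n) (Ψ : Rn n × Rn n → Rn n) (S : Set (Rn n))
    (h : Rn n → ℝ) : Prop :=
  ∀ s ∈ S, ∀ t ∈ S, ∀ α ∈ Icc (0:ℝ) 1, ∀ l ∈ Icc (0:ℝ) 1,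
    h (α • t + E t + l • Ψ (α • s + E s, α • t + E t)) ≤ l * h s + (1 - l) * h t

/-- Strictly semi strongly E-preinvex (SSSEP) with respect to `Ψ` on `S`. -/
def SSSEP {n : ℕ} (E : Rn n → Rn n) (Ψ : Rn n × Rn n → Rn n) (S : Set (Rn n))
    (h : Rn n → ℝ) : Prop :=
  ∀ s ∈ S, ∀ t ∈ S, ∀ α ∈ Icc (0:ℝ) 1, ∀ l ∈ Ioo (0:ℝ) 1,
    α • s + E s ≠ α • t + E t →
    h (α • t + E t + l • Ψ (α • s + E s, α • t + E t)) < l * h s + (1 - l) * h t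

/-- Semi quasi strongly E-preinvex (SQSEP) with respect to `Ψ` on `S`. -/
def SQSEP {n : ℕ} (E : Rn n → Rn n) (Ψ : Rn n × Rn n → Rn n) (S : Set (Rn n))
    (h : Rn n → ℝ) : Prop :=
  ∀ s ∈ S, ∀ t ∈ S, ∀ α ∈ Icc (0:ℝ) 1, ∀ l ∈ Icc (0:ℝ) 1,
    h (α • t + E t + l • Ψ (α • s + E s, α • t + E t)) ≤ max (h s) (h t)

/-- Strongly E-preinvex (SEP) with respect to `Ψ` on `S`. -/
def SEP {n : ℕ} (E : Rn n → Rn n) (Ψ : Rn n × Rn n → Rn n) (S : Set (Rn n))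
    (h : Rn n → ℝ) : Prop :=
  ∀ s ∈ S, ∀ t ∈ S, ∀ α ∈ Icc (0:ℝ) 1, ∀ l ∈ Icc (0:ℝ) 1,
    h (α • t + E t + l • Ψ (α • s + E s, α • t + E t)) ≤ l * h (E s) + (1 - l) * h (E t)

/-- Quasi strongly E-preinvex (QSEP) with respect to `Ψ` on `S`. -/
def QSEP {n : ℕ} (E : Rn n → Rn n) (Ψ : Rn n × Rn n → Rn n) (S : Set (Rn n))
    (h : Rn n → ℝ) : Prop :=
  ∀ s ∈ S, ∀ t ∈ S, ∀ α ∈ Icc (0:ℝ) 1, ∀ l ∈ Icc (0:ℝ) 1,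
    h (α • t + E t + l • Ψ (α • s + E s, α • t + E t)) ≤ max (h (E s)) (h (E t))

/-- Semi pseudo strongly E-preinvex (SPSEP) with respect to `Ψ` on `S`. -/
def SPSEP {n : ℕ} (E : Rn n → Rn n) (Ψ : Rn n × Rn n → Rn n) (S : Set (Rn n))
    (h : Rn n → ℝ) : Prop :=
  ∃ b : Rn n × Rn n → ℝ, (∀ s t, 0 < b (s, t)) ∧
    ∀ s ∈ S, ∀ t ∈ S, h s < h t → ∀ α ∈ Icc (0:ℝ) 1, ∀ l ∈ Icc (0:ℝ) 1,
      h (α • t + E t + l • Ψ (α • s + E s, α • t + E t)) ≤ h t + l * (l - 1) * b (s, t)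

/-- A set `G ⊆ ℝⁿ × ℝ` is strongly G-invex with respect to `E` and `Ψ`. -/
def StronglyGInvex {n : ℕ} (E : Rn n → Rn n) (Ψ : Rn n × Rn n → Rn n)
    (G : Set (Rn n × ℝ)) : Prop :=
  ∀ p ∈ G, ∀ q ∈ G, ∀ α ∈ Icc (0:ℝ) 1, ∀ l ∈ Icc (0:ℝ) 1,
    (α • q.1 + E q.1 + l • Ψ (α • p.1 + E p.1, α • q.1 + E q.1),
      l * p.2 + (1 - l) * q.2) ∈ G

theorem stmt3 {n : ℕ} (E : Rn n → Rn n) (Ψ : Rn n × Rn n → Rn n) (S : Set (Rn n))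
    (hS : SEISet E Ψ S) (I : Type*) [Nonempty I] (f : I → Rn n → ℝ)
    (hbdd : ∀ u : Rn n, BddAbove (Set.range fun i => f i u))
    (hf : ∀ i, SSEP E Ψ S (f i)) :
    SSEP E Ψ S (fun s => ⨆ i, f i s) := by
  intro s hs t ht α hα l hl
  apply ciSup_le
  intro i
  calc f i (α • t + E t + l • Ψ (α • s + E s, α • t + E t))
      ≤ l * f i s + (1 - l) * f i t := hf i s hs t ht α hα l hl
    _ ≤ l * (⨆ j, f j s) + (1 - l) * (⨆ j, f j t) := by
        gcongr
        · exact hl.1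
        · exact le_ciSup (hbdd s) i
        · linarith [hl.2]
        · exact le_ciSup (hbdd t) i
end

section
/- Let S ⊆ ℝⁿ be a strongly E-invex set with respect to Ψ and let h : ℝⁿ → ℝ be strongly E-preinvex with respect to Ψ on S. Then h is semi strongly E-preinvex with respect to Ψ on S if and only if h (E t) ≤ h t for every t ∈ S. -/
open Set

theorem stmt5 {n : ℕ} (E : Rn n → Rn n) (Ψ : Rn n × Rn n → Rn n) (S : Set (Rn n))
    (hS : SEISet E Ψ S) (h : Rn n → ℝ) (hh : SEP E Ψ S h) :
    SSEP E Ψ S h ↔ ∀ t ∈ S, h (E t) ≤ h t := by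
  constructor
  · intro hssep t ht
    have := hssep t ht t ht 0 ⟨le_refl 0, zero_le_one⟩ 0 ⟨le_refl 0, zero_le_one⟩
    simpa using this
  · intro hEt s hs t ht α hα l hl
    have h1 := hh s hs t ht α hα l hl
    have h2 : l * h (E s) + (1 - l) * h (E t) ≤ l * h s + (1 - l) * h t := by
      have := hEt s hs
      have := hEt t ht
      nlinarith [hl.1, hl.2]
    linarith
end

section
/- Let S ⊆ ℝⁿ be a strongly E-invex set with respect to Ψ. If h : ℝⁿ → ℝ is semi strongly E-preinvex with respect to Ψ on S, then h is semi pseudo strongly E-preinvex with respect to Ψ on S. -/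
open Set

theorem stmt8 {n : ℕ} (E : Rn n → Rn n) (Ψ : Rn n × Rn n → Rn n) (S : Set (Rn n))
    (hS : SEISet E Ψ S) (h : Rn n → ℝ) (hh : SSEP E Ψ S h) :
    SPSEP E Ψ S h := by
  refine ⟨fun p => if h p.1 < h p.2 then h p.2 - h p.1 else 1, ?_, ?_⟩
  · intro s t
    by_cases hst : h s < h t <;> simp [hst] <;> linarith
  · intro s hs t ht hlt α hα l hl
    have key := hh s hs t ht α hα l hl
    simp only [hlt, if_pos]
    obtain ⟨hl0, hl1⟩ := hl
    nlinarith [key, mul_nonneg (mul_nonneg hl0 hl0) (sub_pos.mpr hlt).le]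
end

section
/- Let S ⊆ ℝⁿ be a strongly E-invex set with respect to Ψ and let h : ℝⁿ → ℝ. Then h is semi quasi strongly E-preinvex with respect to Ψ on S if and only if for every r ∈ ℝ the lower level set K_r = {s ∈ S : h s ≤ r} is strongly E-invex with respect to Ψ. -/
open Set

theorem stmt9 {n : ℕ} (E : Rn n → Rn n) (Ψ : Rn n × Rn n → Rn n) (S : Set (Rn n))
    (hS : SEISet E Ψ S) (h : Rn n → ℝ) :
    SQSEP E Ψ S h ↔ ∀ r : ℝ, SEISet E Ψ {s ∈ S | h s ≤ r} := by
  constructor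
  · intro hq r s hs t ht α hα l hl
    exact ⟨hS s hs.1 t ht.1 α hα l hl,
      le_trans (hq s hs.1 t ht.1 α hα l hl) (max_le hs.2 ht.2)⟩
  · intro hK s hs t ht α hα l hl
    exact (hK (max (h s) (h t)) s ⟨hs, le_max_left _ _⟩ t ⟨ht, le_max_right _ _⟩ α hα l hl).2
end

section
/- Let S ⊆ ℝⁿ be a strongly E-invex set with respect to Ψ and let h : ℝⁿ → ℝ be semi strongly E-preinvex with respect to Ψ on S. Then for every r ∈ ℝ the lower level set K_r = {s ∈ S : h s ≤ r} is strongly E-invex with respect to Ψ. -/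
open Set

theorem stmt10 {n : ℕ} (E : Rn n → Rn n) (Ψ : Rn n × Rn n → Rn n) (S : Set (Rn n))
    (hS : SEISet E Ψ S) (h : Rn n → ℝ) (hh : SSEP E Ψ S h) :
    ∀ r : ℝ, SEISet E Ψ {s ∈ S | h s ≤ r} := by
  intro r s hs t ht α hα l hl
  refine ⟨hS s hs.1 t ht.1 α hα l hl, ?_⟩
  calc h (α • t + E t + l • Ψ (α • s + E s, α • t + E t))
      ≤ l * h s + (1 - l) * h t := hh s hs.1 t ht.1 α hα l hl
    _ ≤ l * r + (1 - l) * r := by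
        have h1 := hl.1; have h2 := hl.2
        have := hs.2; have := ht.2
        nlinarith
    _ = r := by ring
end

section
/- Let S ⊆ ℝⁿ be a strongly E-invex set with respect to Ψ and let h : ℝⁿ → ℝ. Then h is semi strongly E-preinvex with respect to Ψ on S if and only if the epigraph epi(h) = {(s, γ) ∈ ℝⁿ × ℝ : s ∈ S ∧ h s ≤ γ} is a strongly G-invex subset of ℝⁿ × ℝ. -/
open Set

theorem stmt11 {n : ℕ} (E : Rn n → Rn n) (Ψ : Rn n × Rn n → Rn n) (S : Set (Rn n))
    (hS : SEISet E Ψ S) (h : Rn n → ℝ) :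
    SSEP E Ψ S h ↔
      StronglyGInvex E Ψ {p : Rn n × ℝ | p.1 ∈ S ∧ h p.1 ≤ p.2} := by
  constructor
  · intro hssep p hp q hq α hα l hl
    refine ⟨hS p.1 hp.1 q.1 hq.1 α hα l hl, ?_⟩
    calc h _ ≤ l * h p.1 + (1 - l) * h q.1 := hssep p.1 hp.1 q.1 hq.1 α hα l hl
      _ ≤ l * p.2 + (1 - l) * q.2 := by
          have := hl.1; have := hl.2
          gcongr <;> linarith [hp.2, hq.2]
  · intro hG s hs t ht α hα l hl
    exact (hG (s, h s) ⟨hs, le_refl _⟩ (t, h t) ⟨ht, le_refl _⟩ α hα l hl).2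
end

section
/- Suppose ℝⁿ itself is a strongly E-invex set with respect to Ψ, and let h₁, …, h_k : ℝⁿ → ℝ all be semi strongly E-preinvex with respect to Ψ on ℝⁿ. Then the set S = {s ∈ ℝⁿ : h_i s ≤ 0 for all 1 ≤ i ≤ k} is strongly E-invex with respect to Ψ. -/
open Set

theorem stmt12 {n : ℕ} (E : Rn n → Rn n) (Ψ : Rn n × Rn n → Rn n)
    (hRn : SEISet E Ψ (Set.univ : Set (Rn n)))
    (k : ℕ) (f : Fin k → Rn n → ℝ)
    (hf : ∀ i, SSEP E Ψ (Set.univ : Set (Rn n)) (f i)) :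
    SEISet E Ψ {s : Rn n | ∀ i, f i s ≤ 0} := by
  intro s hs t ht α hα l hl i
  have := hf i s (mem_univ s) t (mem_univ t) α hα l hl
  refine this.trans ?_
  have h1 : l * f i s ≤ 0 := mul_nonpos_of_nonneg_of_nonpos hl.1 (hs i)
  have h2 : (1 - l) * f i t ≤ 0 := mul_nonpos_of_nonneg_of_nonpos (by linarith [hl.2]) (ht i)
  linarith
end

section
/- Suppose ℝⁿ itself is a strongly E-invex set with respect to Ψ, and let h₁, …, h_k : ℝⁿ → ℝ all be semi quasi strongly E-preinvex with respect to Ψ on ℝⁿ. Then the set S = {s ∈ ℝⁿ : h_i s ≤ 0 for all 1 ≤ i ≤ k} is strongly E-invex with respect to Ψ. -/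
open Set

theorem stmt13 {n : ℕ} (E : Rn n → Rn n) (Ψ : Rn n × Rn n → Rn n)
    (hRn : SEISet E Ψ (Set.univ : Set (Rn n)))
    (k : ℕ) (f : Fin k → Rn n → ℝ)
    (hf : ∀ i, SQSEP E Ψ (Set.univ : Set (Rn n)) (f i)) :
    SEISet E Ψ {s : Rn n | ∀ i, f i s ≤ 0} := by
  intro s hs t ht α hα l hl i
  exact le_trans (hf i s trivial t trivial α hα l hl) (max_le (hs i) (ht i))
end

section
/- Let X ⊆ ℝⁿ be a strongly E-invex set with respect to Ψ, let h : ℝⁿ → ℝ satisfy h (α • t + E t) ≤ h t for all t ∈ X and all α ∈ [0,1], and fix α ∈ [0,1]. If t* ∈ X minimizes the function t ↦ h (α • t + E t) over X (i.e. h (α • t* + E t*) ≤ h (α • t + E t) for all t ∈ X), then α • t* + E t* ∈ X and h (α • t* + E t*) ≤ h t for all t ∈ X; that is, α • t* + E t* is an optimal solution of the problem of minimizing h over X. -/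
open Set

theorem stmt14 {n : ℕ} (E : Rn n → Rn n) (Ψ : Rn n × Rn n → Rn n) (X : Set (Rn n))
    (hX : SEISet E Ψ X) (h : Rn n → ℝ)
    (hdec : ∀ t ∈ X, ∀ α ∈ Icc (0:ℝ) 1, h (α • t + E t) ≤ h t)
    (α : ℝ) (hα : α ∈ Icc (0:ℝ) 1)
    (tstar : Rn n) (htstar : tstar ∈ X)
    (hmin : ∀ t ∈ X, h (α • tstar + E tstar) ≤ h (α • t + E t)) :
    α • tstar + E tstar ∈ X ∧ ∀ t ∈ X, h (α • tstar + E tstar) ≤ h t := by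
  constructor
  · have := hX tstar htstar tstar htstar α hα 0 ⟨le_refl 0, zero_le_one⟩
    simpa using this
  · exact fun t ht => le_trans (hmin t ht) (hdec t ht α hα)
end

section
/- Let X ⊆ ℝⁿ be a strongly E-invex set with respect to Ψ, let h : ℝⁿ → ℝ be semi strongly E-preinvex with respect to Ψ on X, and fix α ∈ [0,1]. If t* ∈ X minimizes the function t ↦ h (α • t + E t) over X (i.e. h (α • t* + E t*) ≤ h (α • t + E t) for all t ∈ X), then α • t* + E t* ∈ X and h (α • t* + E t*) ≤ h t for all t ∈ X. -/
open Set

theorem stmt15 {n : ℕ} (E : Rn n → Rn n) (Ψ : Rn n × Rn n → Rn n) (X : Set (Rn n))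
    (hX : SEISet E Ψ X) (h : Rn n → ℝ) (hh : SSEP E Ψ X h)
    (α : ℝ) (hα : α ∈ Icc (0:ℝ) 1)
    (tstar : Rn n) (htstar : tstar ∈ X)
    (hmin : ∀ t ∈ X, h (α • tstar + E tstar) ≤ h (α • t + E t)) :
    α • tstar + E tstar ∈ X ∧ ∀ t ∈ X, h (α • tstar + E tstar) ≤ h t := by
  constructor
  · have := hX tstar htstar tstar htstar α hα 0 ⟨le_refl 0, zero_le_one⟩
    simpa using this
  · intro t ht
    have h1 := hmin t ht
    have h2 := hh t ht t ht α hα 0 ⟨le_refl 0, zero_le_one⟩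
    simp at h2
    linarith
end

section
/- Let X ⊆ ℝⁿ be a strongly E-invex set with respect to Ψ and let h : ℝⁿ → ℝ be strictly semi strongly E-preinvex with respect to Ψ on X. Then the global optimal solution of the problem of minimizing h over X is unique: if s, t ∈ X satisfy h s ≤ h u and h t ≤ h u for all u ∈ X, then s = t. -/
open Set

theorem stmt16 {n : ℕ} (E : Rn n → Rn n) (Ψ : Rn n × Rn n → Rn n) (X : Set (Rn n))
    (hX : SEISet E Ψ X) (h : Rn n → ℝ) (hh : SSSEP E Ψ X h)
    (s t : Rn n) (hs : s ∈ X) (ht : t ∈ X)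
    (hsmin : ∀ u ∈ X, h s ≤ h u) (htmin : ∀ u ∈ X, h t ≤ h u) :
    s = t := by
  by_contra hne
  have hst : h s = h t := le_antisymm (hsmin t ht) (htmin s hs)
  -- find α with α•s+E s ≠ α•t+E t
  obtain ⟨α, hα, hneq⟩ : ∃ α ∈ Icc (0:ℝ) 1, α • s + E s ≠ α • t + E t := by
    by_cases hE : E s = E t
    · refine ⟨1, ⟨zero_le_one, le_refl 1⟩, ?_⟩
      simp only [one_smul, hE]
      intro hc
      exact hne (by simpa using add_right_cancel hc)
    · refine ⟨0, ⟨le_refl 0, zero_le_one⟩, ?_⟩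
      simpa using hE
  have hl : (1/2 : ℝ) ∈ Ioo (0:ℝ) 1 := by norm_num
  have hmem : α • t + E t + (1/2 : ℝ) • Ψ (α • s + E s, α • t + E t) ∈ X :=
    hX s hs t ht α hα (1/2) ⟨by norm_num, by norm_num⟩
  have hlt := hh s hs t ht α hα (1/2) hl hneq
  have := hsmin _ hmem
  rw [hst] at this
  nlinarith [this, hlt]
end

section
/- Let X ⊆ ℝⁿ be a strongly E-invex set with respect to Ψ, let h : ℝⁿ → ℝ be semi strongly E-preinvex with respect to Ψ on X, and let β ∈ ℝ be such that β = h u₀ for some u₀ ∈ X and β ≤ h u for all u ∈ X (β is the minimum value of h on X). Then the set of optimal solutions X_opt = {s ∈ X : h s = β} is strongly E-invex with respect to Ψ. -/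
open Set

theorem stmt17 {n : ℕ} (E : Rn n → Rn n) (Ψ : Rn n × Rn n → Rn n) (X : Set (Rn n))
    (hX : SEISet E Ψ X) (h : Rn n → ℝ) (hh : SSEP E Ψ X h)
    (β : ℝ) (hβ : ∃ u₀ ∈ X, h u₀ = β) (hβmin : ∀ u ∈ X, β ≤ h u) :
    SEISet E Ψ {s ∈ X | h s = β} := by
  rintro s ⟨hsX, hs⟩ t ⟨htX, ht⟩ α hα l hl
  refine ⟨hX s hsX t htX α hα l hl, le_antisymm ?_ ?_⟩
  · calc h _ ≤ l * h s + (1 - l) * h t := hh s hsX t htX α hα l hl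
      _ = β := by rw [hs, ht]; ring
  · exact hβmin _ (hX s hsX t htX α hα l hl)
end

section
/- Let X ⊆ ℝⁿ be a strongly E-invex set with respect to Ψ, let h : ℝⁿ → ℝ be semi quasi strongly E-preinvex with respect to Ψ on X, and let β ∈ ℝ be such that β = h u₀ for some u₀ ∈ X and β ≤ h u for all u ∈ X (β is the minimum value of h on X). Then the set of optimal solutions X_opt = {s ∈ X : h s = β} is strongly E-invex with respect to Ψ. -/
open Set

theorem stmt18 {n : ℕ} (E : Rn n → Rn n) (Ψ : Rn n × Rn n → Rn n) (X : Set (Rn n))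
    (hX : SEISet E Ψ X) (h : Rn n → ℝ) (hh : SQSEP E Ψ X h)
    (β : ℝ) (hβ : ∃ u₀ ∈ X, h u₀ = β) (hβmin : ∀ u ∈ X, β ≤ h u) :
    SEISet E Ψ {s ∈ X | h s = β} := by
  rintro s ⟨hsX, hs⟩ t ⟨htX, ht⟩ α hα l hl
  have hmem := hX s hsX t htX α hα l hl
  refine ⟨hmem, le_antisymm ?_ (hβmin _ hmem)⟩
  have := hh s hsX t htX α hα l hl
  simpa [hs, ht] using this
end

section
/- Suppose ℝⁿ itself is a strongly E-invex set with respect to Ψ. Let h : ℝⁿ → ℝ be strictly semi strongly E-preinvex with respect to Ψ on ℝⁿ, let h₁, …, h_k : ℝⁿ → ℝ be semi strongly E-preinvex with respect to Ψ on ℝⁿ, and let X = {u ∈ ℝⁿ : h_j u ≤ 0 for all 1 ≤ j ≤ k} be nonempty. Let s ∈ X be a fixed point of E (E s = s) that is a local minimum point of h on X, i.e. there exists ε > 0 such that h s ≤ h t for all t ∈ X with ‖t − s‖ < ε. Then s is a strict global minimum point of h on X: h s < h u for every u ∈ X with u ≠ s. -/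
open Set

theorem stmt19 {n : ℕ} (E : Rn n → Rn n) (Ψ : Rn n × Rn n → Rn n)
    (hRn : SEISet E Ψ (Set.univ : Set (Rn n)))
    (h : Rn n → ℝ) (hh : SSSEP E Ψ (Set.univ : Set (Rn n)) h)
    (k : ℕ) (f : Fin k → Rn n → ℝ)
    (hf : ∀ j, SSEP E Ψ (Set.univ : Set (Rn n)) (f j))
    (X : Set (Rn n)) (hXdef : X = {u : Rn n | ∀ j, f j u ≤ 0})
    (hXne : X.Nonempty)
    (s : Rn n) (hsX : s ∈ X) (hfix : E s = s)
    (hloc : ∃ ε > 0, ∀ t ∈ X, ‖t - s‖ < ε → h s ≤ h t) :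
    ∀ u ∈ X, u ≠ s → h s < h u := by
  obtain ⟨ε, hε, hmin⟩ := hloc
  intro u hu hne
  by_contra hc
  push_neg at hc
  have hfu : ∀ j, f j u ≤ 0 := by rw [hXdef] at hu; exact hu
  have hfs : ∀ j, f j s ≤ 0 := by rw [hXdef] at hsX; exact hsX
  set δ : ℝ := min 1 (ε / (2 * (‖s‖ + 1))) with hδdef
  have hδpos : 0 < δ := lt_min one_pos (by positivity)
  have hδ1 : δ ≤ 1 := min_le_left _ _
  have hδs : δ * ‖s‖ < ε / 2 := by
    have h1 : δ ≤ ε / (2 * (‖s‖ + 1)) := min_le_right _ _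
    have h2 : δ * ‖s‖ ≤ (ε / (2 * (‖s‖ + 1))) * ‖s‖ :=
      mul_le_mul_of_nonneg_right h1 (norm_nonneg _)
    have h3 : (ε / (2 * (‖s‖ + 1))) * ‖s‖ < ε / 2 := by
      rw [div_mul_eq_mul_div, div_lt_div_iff₀ (by positivity) (by norm_num)]
      nlinarith [norm_nonneg s]
    linarith
  obtain ⟨α, hα0, hα1, hαs, hαne⟩ :
      ∃ α : ℝ, 0 < α ∧ α ≤ 1 ∧ α * ‖s‖ < ε / 2 ∧ α • u + E u ≠ α • s + E s := by
    by_cases hb : δ • u + E u ≠ δ • s + E s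
    · exact ⟨δ, hδpos, hδ1, hδs, hb⟩
    · push_neg at hb
      refine ⟨δ/2, by positivity, by linarith, ?_, ?_⟩
      · nlinarith [norm_nonneg s]
      · intro hb2
        apply hne
        have hsub : δ • u - (δ/2) • u = δ • s - (δ/2) • s := by
          have := congrArg₂ (· - ·) hb hb2
          simpa using by linear_combination (norm := abel) this
        rw [← sub_smul, ← sub_smul] at hsub
        have hhalf : δ - δ/2 ≠ 0 := by intro h0; rw [sub_eq_zero] at h0; linarith
        exact smul_right_injective (Rn n) hhalf hsub
  set v : Rn n := Ψ (α • u + E u, α • s + E s) with hv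
  set l : ℝ := min (1/2) (ε / (2 * (‖v‖ + 1))) with hl
  have hlpos : 0 < l := lt_min (by norm_num) (by positivity)
  have hl1 : l < 1 := lt_of_le_of_lt (min_le_left _ _) (by norm_num)
  have hlv : l * ‖v‖ < ε / 2 := by
    have h1 : l ≤ ε / (2 * (‖v‖ + 1)) := min_le_right _ _
    have h2 : l * ‖v‖ ≤ (ε / (2 * (‖v‖ + 1))) * ‖v‖ :=
      mul_le_mul_of_nonneg_right h1 (norm_nonneg _)
    have h3 : (ε / (2 * (‖v‖ + 1))) * ‖v‖ < ε / 2 := by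
      rw [div_mul_eq_mul_div, div_lt_div_iff₀ (by positivity) (by norm_num)]
      nlinarith [norm_nonneg v]
    linarith
  set z : Rn n := α • s + E s + l • v with hz
  have hzX : z ∈ X := by
    rw [hXdef]
    intro j
    have key := hf j u (mem_univ _) s (mem_univ _) α ⟨le_of_lt hα0, hα1⟩ l
      ⟨le_of_lt hlpos, le_of_lt hl1⟩
    have hzf : f j z ≤ l * f j u + (1 - l) * f j s := key
    have := hfu j
    have := hfs j
    nlinarith
  have hznorm : ‖z - s‖ < ε := by
    have heq : z - s = α • s + l • v := by
      rw [hz, hfix]; abel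
    rw [heq]
    calc ‖α • s + l • v‖ ≤ ‖α • s‖ + ‖l • v‖ := norm_add_le _ _
      _ = α * ‖s‖ + l * ‖v‖ := by
          rw [norm_smul, norm_smul, Real.norm_eq_abs, Real.norm_eq_abs,
            abs_of_pos hα0, abs_of_pos hlpos]
      _ < ε := by linarith
  have h1 : h s ≤ h z := hmin z hzX hznorm
  have h2 : h z < l * h u + (1 - l) * h s :=
    hh u (mem_univ _) s (mem_univ _) α ⟨le_of_lt hα0, hα1⟩ l ⟨hlpos, hl1⟩ hαne
  nlinarith
end
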